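/- If w = w_1 ⋯ w_ℓ is a disjoint wreath cycle decomposition of w ∈ K ≀_Γ H with w_i = (f_i, h_i), then the order of w equals LCM(|w_1|, …, |w_ℓ|) = LCM(|[-,w_1]Yade|·|h_1|, …, |[-,w_ℓ]Yade|·|h_ℓ|). -/

import Mathlib

set_option linter.unusedSectionVars false

/-- The wreath product `K ≀_Γ Sym(Γ)` (with right-action conventions from the paper):
multiplication `(f,h)(e,g) = (f · e^{h⁻¹}, hg)` where `[γ](f·e^{h⁻¹}) = [γ]f * [γ^h]e`. -/
structure Wr (K : Type*) (Γ : Type*) where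
  base : Γ → K
  top : Equiv.Perm Γ

namespace Wr

variable {K Γ : Type*} [Group K]

theorem ext' {w v : Wr K Γ} (h1 : w.base = v.base) (h2 : w.top = v.top) : w = v := by
  cases w; cases v; cases h1; cases h2; rfl

instance : Group (Wr K Γ) where
  mul w v := ⟨fun γ => w.base γ * v.base (w.top γ), w.top.trans v.top⟩
  one := ⟨fun _ => 1, 1⟩
  inv w := ⟨fun γ => (w.base (w.top⁻¹ γ))⁻¹, w.top⁻¹⟩
  mul_assoc a b c := ext' (funext fun γ => mul_assoc _ _ _) (Equiv.trans_assoc _ _ _)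
  one_mul a := ext' (funext fun γ => one_mul _) (Equiv.refl_trans _)
  mul_one a := ext' (funext fun γ => mul_one _) (Equiv.trans_refl _)
  inv_mul_cancel a := ext' (funext fun γ => inv_mul_cancel _) (Equiv.symm_trans_self _)

/-- The support of a permutation, as a set. -/
def psupp (h : Equiv.Perm Γ) : Set Γ := {γ | h γ ≠ γ}

/-- The territory of a wreath product element. -/
def terr (w : Wr K Γ) : Set Γ := psupp w.top ∪ {γ | w.base γ ≠ 1}

/-- Wreath cycles: either trivial top and a singleton territory, or the top is a
single nontrivial cycle and the territory equals its support. -/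
def IsWreathCycle (w : Wr K Γ) : Prop :=
  (w.top = 1 ∧ ∃ γ₀, terr w = {γ₀}) ∨ (w.top.IsCycle ∧ terr w = psupp w.top)

/-- The yade of `w` at `γ`: the ordered product `∏_{i=0}^{|h|-1} [γ^{h^i}]f`. -/
noncomputable def yade (w : Wr K Γ) (γ : Γ) : K :=
  ((List.range (orderOf w.top)).map fun i => w.base ((w.top ^ i) γ)).prod

-- basic simp lemmas
@[simp] lemma mul_base (w v : Wr K Γ) (γ : Γ) :
    (w * v).base γ = w.base γ * v.base (w.top γ) := rfl

@[simp] lemma mul_top (w v : Wr K Γ) : (w * v).top = w.top.trans v.top := rfl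

@[simp] lemma one_base (γ : Γ) : (1 : Wr K Γ).base γ = 1 := rfl

@[simp] lemma one_top : (1 : Wr K Γ).top = 1 := rfl

lemma mul_top_apply (w v : Wr K Γ) (γ : Γ) : (w * v).top γ = v.top (w.top γ) := rfl

lemma eq_one_iff (w : Wr K Γ) : w = 1 ↔ (∀ γ, w.base γ = 1) ∧ ∀ γ, w.top γ = γ := by
  constructor
  · rintro rfl; exact ⟨fun _ => rfl, fun _ => rfl⟩
  · rintro ⟨h1, h2⟩
    exact ext' (funext h1) (Equiv.ext h2)

lemma base_eq_one_of_notMem {w : Wr K Γ} {γ : Γ} (h : γ ∉ terr w) : w.base γ = 1 := by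
  simp [terr, psupp] at h; exact h.2

lemma top_fix_of_notMem {w : Wr K Γ} {γ : Γ} (h : γ ∉ terr w) : w.top γ = γ := by
  simp [terr, psupp] at h; exact h.1

lemma top_pow_fix {w : Wr K Γ} {γ : Γ} (h : γ ∉ terr w) (n : ℕ) : (w.top ^ n) γ = γ := by
  induction n with
  | zero => rfl
  | succ n ih => rw [pow_succ', Equiv.Perm.mul_apply, ih, top_fix_of_notMem h]

lemma top_mem_terr {w : Wr K Γ} {γ : Γ} (h : γ ∈ terr w) : w.top γ ∈ terr w := by
  by_cases hγ : w.top γ = γ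
  · rwa [hγ]
  · exact Or.inl (fun hh => hγ (w.top.injective hh))

lemma pow_top (w : Wr K Γ) (n : ℕ) : (w ^ n).top = w.top ^ n := by
  induction n with
  | zero => rfl
  | succ n ih =>
    rw [pow_succ, mul_top, ih, pow_succ']
    rfl

lemma pow_base (w : Wr K Γ) (n : ℕ) (γ : Γ) :
    (w ^ n).base γ = ((List.range n).map fun i => w.base ((w.top ^ i) γ)).prod := by
  induction n with
  | zero => rfl
  | succ n ih =>
    rw [pow_succ, mul_base, ih, pow_top, List.range_succ, List.map_append, List.prod_append]
    simp

lemma terr_mul (w v : Wr K Γ) : terr (w * v) ⊆ terr w ∪ terr v := by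
  intro γ hγ
  by_contra h
  simp only [Set.mem_union, not_or] at h
  rcases hγ with hγ | hγ
  · exact hγ (by rw [mul_top_apply, top_fix_of_notMem h.1, top_fix_of_notMem h.2])
  · exact hγ (by rw [mul_base, base_eq_one_of_notMem h.1, top_fix_of_notMem h.1,
      base_eq_one_of_notMem h.2, one_mul])

lemma terr_pow (w : Wr K Γ) (n : ℕ) : terr (w ^ n) ⊆ terr w := by
  intro γ hγ
  by_contra h
  rcases hγ with hγ | hγ
  · exact hγ (by rw [pow_top]; exact top_pow_fix h n)
  · refine hγ ?_
    rw [pow_base]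
    apply List.prod_eq_one
    intro x hx
    simp only [List.mem_map] at hx
    obtain ⟨i, _, rfl⟩ := hx
    rw [top_pow_fix h i]
    exact base_eq_one_of_notMem h

lemma commute_of_disjoint {w v : Wr K Γ} (h : Disjoint (terr w) (terr v)) :
    Commute w v := by
  have hwv : ∀ γ, γ ∈ terr w → γ ∉ terr v := fun γ hw hv => h.ne_of_mem hw hv rfl
  have hvw : ∀ γ, γ ∈ terr v → γ ∉ terr w := fun γ hv hw => h.ne_of_mem hw hv rfl
  refine ext' (funext fun γ => ?_) (Equiv.ext fun γ => ?_)
  · simp only [mul_base]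
    by_cases hw : γ ∈ terr w
    · rw [base_eq_one_of_notMem (hwv γ hw), base_eq_one_of_notMem (hwv _ (top_mem_terr hw)),
        top_fix_of_notMem (hwv γ hw), mul_one, one_mul]
    · by_cases hv : γ ∈ terr v
      · rw [base_eq_one_of_notMem hw, base_eq_one_of_notMem (hvw _ (top_mem_terr hv)),
          top_fix_of_notMem hw, mul_one, one_mul]
      · rw [base_eq_one_of_notMem hw, base_eq_one_of_notMem hv, top_fix_of_notMem hw,
          top_fix_of_notMem hv, base_eq_one_of_notMem hw, base_eq_one_of_notMem hv]
  · show (w.top.trans v.top) γ = (v.top.trans w.top) γ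
    simp only [Equiv.trans_apply]
    by_cases hw : γ ∈ terr w
    · rw [top_fix_of_notMem (hwv γ hw), top_fix_of_notMem (hwv _ (top_mem_terr hw))]
    · by_cases hv : γ ∈ terr v
      · rw [top_fix_of_notMem hw, top_fix_of_notMem (hvw _ (top_mem_terr hv))]
      · rw [top_fix_of_notMem hw, top_fix_of_notMem hv, top_fix_of_notMem hw]

lemma mul_eq_one_of_disjoint {w v : Wr K Γ} (h : Disjoint (terr w) (terr v))
    (hwv : w * v = 1) : w = 1 ∧ v = 1 := by
  have hv : v = 1 := by
    rw [eq_one_iff]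
    rw [eq_one_iff] at hwv
    constructor
    · intro γ
      by_cases hγ : γ ∈ terr w
      · exact base_eq_one_of_notMem (fun hv' => h.ne_of_mem hγ hv' rfl)
      · have := hwv.1 γ
        rwa [mul_base, base_eq_one_of_notMem hγ, top_fix_of_notMem hγ, one_mul] at this
    · intro γ
      by_cases hγ : γ ∈ terr w
      · exact top_fix_of_notMem (fun hv' => h.ne_of_mem hγ hv' rfl)
      · have := hwv.2 γ
        rwa [mul_top_apply, top_fix_of_notMem hγ] at this
  refine ⟨?_, hv⟩
  rw [hv, mul_one] at hwv
  exact hwv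

lemma prod_eq_one_of_disjoint {l : List (Wr K Γ)}
    (hd : l.Pairwise fun z v => Disjoint (terr z) (terr v)) (h : l.prod = 1) :
    ∀ z ∈ l, z = 1 := by
  induction l with
  | nil => simp
  | cons a t ih =>
    rw [List.pairwise_cons] at hd
    rw [List.prod_cons] at h
    have hdis : Disjoint (terr a) (terr t.prod) := by
      rw [Set.disjoint_right]
      intro γ hγ
      have : terr t.prod ⊆ ⋃ z ∈ t, terr z := by
        clear hγ h ih hd
        induction t with
        | nil =>
          intro γ hγ
          simp [terr, psupp] at hγ
        | cons b s ihs =>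
          rw [List.prod_cons]
          refine (terr_mul _ _).trans ?_
          intro x hx
          rcases hx with hx | hx
          · simp only [List.mem_cons, Set.mem_iUnion]
            exact ⟨b, ⟨Or.inl rfl, hx⟩⟩
          · have := ihs hx
            simp only [Set.mem_iUnion, List.mem_cons] at this ⊢
            obtain ⟨z, hz, hx'⟩ := this
            exact ⟨z, Or.inr hz, hx'⟩
      have hγ' := this hγ
      simp only [Set.mem_iUnion] at hγ'
      obtain ⟨z, hz, hγ'⟩ := hγ'
      exact fun ha => (hd.1 z hz).ne_of_mem ha hγ' rfl
    obtain ⟨ha, ht⟩ := mul_eq_one_of_disjoint hdis h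
    intro z hz
    rcases List.mem_cons.mp hz with rfl | hz
    · exact ha
    · exact ih hd.2 ht z hz

lemma prod_pow_eq {l : List (Wr K Γ)}
    (hd : l.Pairwise fun z v => Disjoint (terr z) (terr v)) (n : ℕ) :
    l.prod ^ n = (l.map (· ^ n)).prod := by
  induction l with
  | nil => simp
  | cons a t ih =>
    rw [List.pairwise_cons] at hd
    rw [List.prod_cons, List.map_cons, List.prod_cons, ← ih hd.2]
    have : Commute a t.prod := Commute.list_prod_right _ _
      (fun v hv => commute_of_disjoint (hd.1 v hv))
    exact this.mul_pow n

lemma orderOf_eq_of_iff {G : Type*} [Monoid G] {a : G} {c : ℕ}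
    (h : ∀ n, a ^ n = 1 ↔ c ∣ n) : orderOf a = c := by
  have h1 : orderOf a ∣ c := orderOf_dvd_of_pow_eq_one ((h c).2 dvd_rfl)
  rcases Nat.eq_zero_or_pos c with rfl | hc
  · exact Nat.eq_zero_of_zero_dvd ((h _).1 (pow_orderOf_eq_one a))
  · have h0 : orderOf a ≠ 0 := by
      rintro h0
      rw [h0, Nat.zero_dvd] at h1
      omega
    exact Nat.dvd_antisymm h1 ((h _).1 (pow_orderOf_eq_one a))

end Wr

section MainAux

variable {K Γ : Type*} [Group K]
open Wr

lemma yade_notMem {w : Wr K Γ} {δ : Γ} (h : δ ∉ terr w) : yade w δ = 1 := by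
  unfold yade
  apply List.prod_eq_one
  intro x hx
  simp only [List.mem_map] at hx
  obtain ⟨i, _, rfl⟩ := hx
  rw [top_pow_fix h]
  exact base_eq_one_of_notMem h

lemma yade_semiconj [Fintype Γ] (w : Wr K Γ) (δ : Γ) :
    w.base δ * yade w (w.top δ) = yade w δ * w.base δ := by
  set m := orderOf w.top with hm
  have h1 : ((List.range (m + 1)).map fun i => w.base ((w.top ^ i) δ)).prod
      = w.base δ * yade w (w.top δ) := by
    have hfun : ((fun i => w.base ((w.top ^ i) δ)) ∘ Nat.succ)
        = fun i => w.base ((w.top ^ i) (w.top δ)) := by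
      funext i
      simp only [Function.comp_apply, pow_succ, Equiv.Perm.mul_apply]
    rw [List.range_succ_eq_map, List.map_cons, List.prod_cons, List.map_map, hfun]
    rfl
  have h2 : ((List.range (m + 1)).map fun i => w.base ((w.top ^ i) δ)).prod
      = yade w δ * w.base δ := by
    rw [List.range_succ, List.map_append, List.prod_append]
    congr 1
    simp [hm, pow_orderOf_eq_one]
  rw [← h1, h2]

lemma orderOf_yade_top [Fintype Γ] (w : Wr K Γ) (δ : Γ) :
    orderOf (yade w (w.top δ)) = orderOf (yade w δ) :=
  SemiconjBy.orderOf_eq (w.base δ) (yade_semiconj w δ)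

lemma orderOf_yade_pow [Fintype Γ] (w : Wr K Γ) (γ : Γ) (k : ℕ) :
    orderOf (yade w ((w.top ^ k) γ)) = orderOf (yade w γ) := by
  induction k with
  | zero => rfl
  | succ k ih =>
    rw [pow_succ', Equiv.Perm.mul_apply, orderOf_yade_top, ih]

lemma pow_mt_base [Fintype Γ] (w : Wr K Γ) (t : ℕ) (δ : Γ) :
    (w ^ (orderOf w.top * t)).base δ = (yade w δ) ^ t := by
  induction t with
  | zero => rw [Nat.mul_zero, pow_zero, pow_zero]; rfl
  | succ t ih =>
    rw [Nat.mul_succ, pow_add, mul_base, ih, pow_top, pow_mul, pow_orderOf_eq_one, one_pow]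
    have : ((1 : Equiv.Perm Γ)) δ = δ := rfl
    rw [this, pow_succ]
    congr 1
    rw [pow_base]
    rfl

lemma pow_eq_one_iff_cycle [Fintype Γ] {w : Wr K Γ} (hw : IsWreathCycle w)
    {γ : Γ} (hγ : γ ∈ terr w) (n : ℕ) :
    w ^ n = 1 ↔ orderOf (yade w γ) * orderOf w.top ∣ n := by
  set m := orderOf w.top with hmdef
  set d := orderOf (yade w γ) with hddef
  have hm : 0 < m := orderOf_pos w.top
  have hkey : ∀ δ, orderOf (yade w δ) ∣ d := by
    intro δ
    by_cases hδ : δ ∈ terr w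
    · rcases hw with ⟨htop, γ₀, hterr⟩ | ⟨hcyc, hterr⟩
      · rw [hterr] at hδ hγ
        rw [Set.mem_singleton_iff] at hδ hγ
        rw [hδ, ← hγ]
      · rw [hterr] at hδ hγ
        obtain ⟨i, hi⟩ := hcyc.exists_pow_eq hγ hδ
        rw [← hi, orderOf_yade_pow]
    · rw [yade_notMem hδ, orderOf_one]
      exact one_dvd _
  constructor
  · intro h1
    rw [eq_one_iff] at h1
    have htopn : w.top ^ n = 1 := by
      ext δ
      have := h1.2 δ
      rw [pow_top] at this
      exact this
    obtain ⟨t, rfl⟩ := orderOf_dvd_of_pow_eq_one htopn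
    have hb := h1.1 γ
    rw [pow_mt_base] at hb
    have hdt : d ∣ t := orderOf_dvd_of_pow_eq_one hb
    have := mul_dvd_mul_right hdt m
    rwa [mul_comm t m] at this
  · intro h1
    have hmn : m ∣ n := (dvd_mul_left m d).trans h1
    obtain ⟨t, rfl⟩ := hmn
    have hdt : d ∣ t := by
      rw [mul_comm d m, Nat.mul_dvd_mul_iff_left hm] at h1
      exact h1
    rw [eq_one_iff]
    refine ⟨fun δ => ?_, fun δ => ?_⟩
    · rw [pow_mt_base]
      exact orderOf_dvd_iff_pow_eq_one.1 ((hkey δ).trans hdt)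
    · rw [pow_top, pow_mul, pow_orderOf_eq_one, one_pow]
      rfl

lemma foldr_lcm_dvd (l : List ℕ) (n : ℕ) :
    l.foldr Nat.lcm 1 ∣ n ↔ ∀ a ∈ l, a ∣ n := by
  induction l with
  | nil => simp
  | cons a t ih => simp [List.foldr_cons, Nat.lcm_dvd_iff, ih]

end MainAux

open Wr

open Wr

/-- if `w = w₁ ⋯ w_ℓ` is a disjoint wreath cycle decomposition, then
`|w| = LCM(|w₁|,…,|w_ℓ|)` and each `|wᵢ| = |[-,wᵢ]Yade| · |hᵢ|`. -/
theorem orderOf_wreathCycle_decomposition {K Γ : Type*} [Group K] [Fintype Γ]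
    (H : Subgroup (Equiv.Perm Γ)) (l : List (Wr K Γ))
    (hc : ∀ z ∈ l, IsWreathCycle z)
    (hd : l.Pairwise fun z v => Disjoint (terr z) (terr v))
    (hH : l.prod.top ∈ H) :
    orderOf l.prod = (l.map fun z => orderOf z).foldr Nat.lcm 1 ∧
      ∀ z ∈ l, ∀ γ ∈ terr z, orderOf z = orderOf (yade z γ) * orderOf z.top := by
  constructor
  · apply orderOf_eq_of_iff
    intro n
    rw [prod_pow_eq hd, foldr_lcm_dvd]
    constructor
    · intro h1 a ha
      simp only [List.mem_map] at ha
      obtain ⟨z, hz, rfl⟩ := ha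
      apply orderOf_dvd_of_pow_eq_one
      have hd' : (l.map (· ^ n)).Pairwise fun z v => Disjoint (terr z) (terr v) := by
        rw [List.pairwise_map]
        exact hd.imp fun h => h.mono (terr_pow _ n) (terr_pow _ n)
      exact prod_eq_one_of_disjoint hd' h1 (z ^ n) (List.mem_map_of_mem hz)
    · intro h1
      apply List.prod_eq_one
      intro x hx
      simp only [List.mem_map] at hx
      obtain ⟨z, hz, rfl⟩ := hx
      exact orderOf_dvd_iff_pow_eq_one.1 (h1 _ (List.mem_map_of_mem hz))
  · intro z hz γ hγ
    exact orderOf_eq_of_iff (pow_eq_one_iff_cycle (hc z hz) hγ)
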